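/- If X is a linearly Lindelöf topological space, then every open cover of X of size less than ℵ_ω has a countable subcover. -/

import Mathlib

open Set Cardinal Topology

universe u v

/-- A space is quasi-Lindelöf if every open cover has a countable subcover
(no separation axioms assumed). -/
def QuasiLindelofSp (X : Type u) [TopologicalSpace X] : Prop :=
  ∀ 𝒰 : Set (Set X), (∀ U ∈ 𝒰, IsOpen U) → ⋃₀ 𝒰 = Set.univ →
    ∃ 𝒱 ⊆ 𝒰, 𝒱.Countable ∧ ⋃₀ 𝒱 = Set.univ

/-- Lindelöf in the sense of Engelking: regular (T3, including T1) and
every open cover has a countable subcover. -/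
def EngLindelofSp (X : Type u) [TopologicalSpace X] : Prop :=
  RegularSpace X ∧ T1Space X ∧ QuasiLindelofSp X

/-- X is productively Lindelöf if X × Y is Lindelöf for every Lindelöf space Y. -/
def ProductivelyLindelofSp (X : Type u) [TopologicalSpace X] : Prop :=
  ∀ (Y : Type u) [TopologicalSpace Y], EngLindelofSp Y → EngLindelofSp (X × Y)

/-- X is productively quasi-Lindelöf if X × Y is quasi-Lindelöf for every Lindelöf space Y. -/
def ProductivelyQuasiLindelofSp (X : Type u) [TopologicalSpace X] : Prop :=
  ∀ (Y : Type u) [TopologicalSpace Y], EngLindelofSp Y → QuasiLindelofSp (X × Y)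

/-- X is powerfully Lindelöf if X^ω is Lindelöf. -/
def PowerfullyLindelofSp (X : Type u) [TopologicalSpace X] : Prop :=
  EngLindelofSp (ℕ → X)

/-- X is powerfully quasi-Lindelöf if X^ω is quasi-Lindelöf. -/
def PowerfullyQuasiLindelofSp (X : Type u) [TopologicalSpace X] : Prop :=
  QuasiLindelofSp (ℕ → X)

/-- Tightness of X is at most κ. -/
def TightnessLE (X : Type u) [TopologicalSpace X] (κ : Cardinal.{u}) : Prop :=
  ∀ (A : Set X) (x : X), x ∈ closure A → ∃ B ⊆ A, #B ≤ κ ∧ x ∈ closure B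

/-- X has countable tightness. -/
def CountableTightness (X : Type u) [TopologicalSpace X] : Prop :=
  ∀ (A : Set X) (x : X), x ∈ closure A → ∃ B ⊆ A, B.Countable ∧ x ∈ closure B

/-- The Lindelöf number of X is at most κ: every open cover has a subcover of size ≤ κ. -/
def LindelofNumberLE (X : Type u) [TopologicalSpace X] (κ : Cardinal.{u}) : Prop :=
  ∀ 𝒰 : Set (Set X), (∀ U ∈ 𝒰, IsOpen U) → ⋃₀ 𝒰 = Set.univ →
    ∃ 𝒱 ⊆ 𝒰, #𝒱 ≤ κ ∧ ⋃₀ 𝒱 = Set.univ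

/-- The weight of X is at most κ: there is a base of size ≤ κ. -/
def WeightLE (X : Type u) [TopologicalSpace X] (κ : Cardinal.{u}) : Prop :=
  ∃ B : Set (Set X), TopologicalSpace.IsTopologicalBasis B ∧ #B ≤ κ

/-- N is a network for X. -/
def IsNetwork (X : Type u) [TopologicalSpace X] (N : Set (Set X)) : Prop :=
  ∀ (x : X) (U : Set X), IsOpen U → x ∈ U → ∃ n ∈ N, x ∈ n ∧ n ⊆ U

/-- X is linearly Lindelöf: regular (incl. T1) and every open cover linearly
ordered by inclusion has a countable subcover. -/
def LinearlyLindelofSp (X : Type u) [TopologicalSpace X] : Prop :=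
  RegularSpace X ∧ T1Space X ∧
    ∀ 𝒰 : Set (Set X), (∀ U ∈ 𝒰, IsOpen U) → IsChain (· ⊆ ·) 𝒰 → ⋃₀ 𝒰 = Set.univ →
      ∃ 𝒱 ⊆ 𝒰, 𝒱.Countable ∧ ⋃₀ 𝒱 = Set.univ

/-- U ⊆ X^ω is a basic open set: a product of open sets, all but finitely many of
which equal X. -/
def IsBasicOpen (X : Type u) [TopologicalSpace X] (U : Set (ℕ → X)) : Prop :=
  ∃ V : ℕ → Set X, (∀ i, IsOpen (V i)) ∧ {i | V i ≠ Set.univ}.Finite ∧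
    U = Set.pi Set.univ V

/-- A family of subsets of Z is point-κ if every point belongs to at most κ members. -/
def PointLE {Z : Type u} (𝒲 : Set (Set Z)) (κ : Cardinal.{u}) : Prop :=
  ∀ z : Z, #({W ∈ 𝒲 | z ∈ W}) ≤ κ

/-- A non-empty space is zero-dimensional if it is T1 and has a base of clopen sets. -/
def ZeroDimensionalSp (Y : Type u) [TopologicalSpace Y] : Prop :=
  Nonempty Y ∧ T1Space Y ∧
    ∃ B : Set (Set Y), TopologicalSpace.IsTopologicalBasis B ∧ ∀ b ∈ B, IsClopen b


lemma key_aux (n : ℕ) : ∀ (X : Type u) [TopologicalSpace X], LinearlyLindelofSp X →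
    ∀ 𝒰 : Set (Set X), (∀ U ∈ 𝒰, IsOpen U) → ⋃₀ 𝒰 = Set.univ →
    Cardinal.mk 𝒰 ≤ Cardinal.aleph n →
    ∃ 𝒱 ⊆ 𝒰, 𝒱.Countable ∧ ⋃₀ 𝒱 = Set.univ := by
  induction n with
  | zero =>
    intro X _ _ 𝒰 hop hcov hle
    refine ⟨𝒰, subset_rfl, ?_, hcov⟩
    rw [← Set.countable_coe_iff, ← Cardinal.mk_le_aleph0_iff]
    simpa [Cardinal.aleph_zero] using hle
  | succ n ih =>
    intro X _ hlin 𝒰 hop hcov hle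
    set κ : Cardinal.{u} := Cardinal.aleph (n + 1 : ℕ) with hκ
    have hmkO : #κ.ord.ToType = κ := by rw [Cardinal.mk_toType, Cardinal.card_ord]
    obtain ⟨e⟩ : Nonempty (𝒰 ↪ κ.ord.ToType) := by
      rw [← Cardinal.le_def, hmkO]; exact hle
    set W : κ.ord.ToType → Set X := fun α => ⋃ U : 𝒰, ⋃ (_ : e U ≤ α), (U : Set X) with hW
    have hWmono : ∀ {α β : κ.ord.ToType}, α ≤ β → W α ⊆ W β := by
      intro α β hab
      exact Set.iUnion_mono fun U => Set.iUnion_subset fun h =>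
        Set.subset_iUnion_of_subset (h.trans hab) subset_rfl
    obtain ⟨𝒱, h𝒱sub, h𝒱c, h𝒱cov⟩ := hlin.2.2 (Set.range W)
      (by rintro _ ⟨α, rfl⟩; exact isOpen_iUnion fun U => isOpen_iUnion fun _ => hop U U.2)
      (by rintro _ ⟨α, rfl⟩ _ ⟨β, rfl⟩ _
          rcases le_total α β with h | h
          · exact Or.inl (hWmono h)
          · exact Or.inr (hWmono h))
      (by
        apply Set.eq_univ_of_forall
        intro x
        have hx : x ∈ ⋃₀ 𝒰 := hcov ▸ Set.mem_univ x
        obtain ⟨U, hU, hxU⟩ := hx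
        refine ⟨W (e ⟨U, hU⟩), ⟨_, rfl⟩, ?_⟩
        exact Set.mem_iUnion.2 ⟨⟨U, hU⟩, Set.mem_iUnion.2 ⟨le_rfl, hxU⟩⟩)
    have hchoice : ∀ V : 𝒱, ∃ α : κ.ord.ToType, W α = V := fun V => h𝒱sub V.2
    choose g hg using hchoice
    have hTc : (Set.range g).Countable := by
      have : Countable 𝒱 := h𝒱c.to_subtype
      exact Set.countable_range g
    obtain ⟨β, hβ⟩ : ∃ β : κ.ord.ToType, ∀ α ∈ Set.range g, α < β := by
      have hreg : Cardinal.IsRegular κ := by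
        have hsucc : ((n : Ordinal) + 1) = Order.succ (n : Ordinal) := rfl
        rw [hκ]; push_cast
        rw [hsucc]
        exact Cardinal.isRegular_aleph_succ _
      have hlt : #(Set.range g) < κ.ord.cof := by
        rw [hreg.cof_eq]
        calc #(Set.range g) ≤ ℵ₀ := Cardinal.mk_le_aleph0_iff.2 hTc.to_subtype
          _ < κ := Cardinal.aleph0_lt_aleph_one.trans_le (by
              rw [hκ]
              exact Cardinal.aleph_le_aleph.2 (by
                exact_mod_cast Nat.one_le_iff_ne_zero.2 (Nat.succ_ne_zero n)))
      haveI : IsWellOrder κ.ord.ToType (· < ·) := isWellOrder_lt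
      exact not_isCofinal_iff.1 fun hc => (Order.cof_le hc).not_gt (by rw [Ordinal.cof_toType]; exact hlt)
    have hWβ : W β = Set.univ := by
      apply Set.eq_univ_of_univ_subset
      rw [← h𝒱cov]
      intro x hx
      obtain ⟨V, hV, hxV⟩ := hx
      have hxV' : x ∈ W (g ⟨V, hV⟩) := by rw [hg ⟨V, hV⟩]; exact hxV
      exact hWmono (hβ _ ⟨⟨V, hV⟩, rfl⟩).le hxV'
    set 𝒰' : Set (Set X) := {U | ∃ hU : U ∈ 𝒰, e ⟨U, hU⟩ ≤ β} with h𝒰'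
    have hsub' : 𝒰' ⊆ 𝒰 := fun U hU => hU.1
    have hcov' : ⋃₀ 𝒰' = Set.univ := by
      apply Set.eq_univ_of_univ_subset
      rw [← hWβ]
      intro x hx
      rw [hW] at hx
      simp only [Set.mem_iUnion] at hx
      obtain ⟨U, hle', hxU⟩ := hx
      exact ⟨U, ⟨U.2, hle'⟩, hxU⟩
    have hcard' : #𝒰' ≤ Cardinal.aleph n := by
      have h1 : #𝒰' ≤ #(Set.Iic β) := by
        refine Cardinal.mk_le_of_injective
          (f := fun U : 𝒰' => (⟨e ⟨U.1, U.2.choose⟩, U.2.choose_spec⟩ : Set.Iic β)) ?_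
        intro U V h
        have h' := e.injective (congrArg Subtype.val h)
        exact Subtype.ext (Subtype.mk_eq_mk.mp h')
      have h2 : #(Set.Iic β) < κ := by
        have hIic : (Set.Iic β : Set κ.ord.ToType) ⊆ insert β (Set.Iio β) := by
          intro x hx
          rcases lt_or_eq_of_le (Set.mem_Iic.1 hx) with h | h
          · exact Or.inr h
          · exact Or.inl h
        have hIio : #(Set.Iio β : Set κ.ord.ToType) < κ := Cardinal.mk_Iio_ord_toType β
        calc #(Set.Iic β) ≤ #(insert β (Set.Iio β) : Set κ.ord.ToType) :=
              Cardinal.mk_le_mk_of_subset hIic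
          _ ≤ #(Set.Iio β) + 1 := Cardinal.mk_insert_le
          _ < κ := by
              rcases le_or_gt ℵ₀ #(Set.Iio β : Set κ.ord.ToType) with h | h
              · rwa [Cardinal.add_one_eq h]
              · exact (Cardinal.add_lt_aleph0 h Cardinal.one_lt_aleph0).trans_le
                  (Cardinal.aleph0_le_aleph _)
      have h3 : #𝒰' < κ := h1.trans_lt h2
      have h4 : #𝒰' < Order.succ (Cardinal.aleph n) := by
        rwa [hκ, show (((n + 1 : ℕ)) : Ordinal) = Order.succ (n : Ordinal) by push_cast; rfl,
          Cardinal.aleph_succ] at h3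
      exact Order.lt_succ_iff.1 h4
    obtain ⟨𝒱', hs1, hs2, hs3⟩ := ih X hlin 𝒰' (fun U hU => hop U (hsub' hU)) hcov' hcard'
    exact ⟨𝒱', hs1.trans hsub', hs2, hs3⟩

/-- In a linearly Lindelöf space, every open cover of size less than
ℵ_ω has a countable subcover. -/
theorem stmt9 (X : Type u) [TopologicalSpace X] (hlin : LinearlyLindelofSp X)
    (𝒰 : Set (Set X)) (hop : ∀ U ∈ 𝒰, IsOpen U) (hcov : ⋃₀ 𝒰 = Set.univ)
    (hsize : #𝒰 < Cardinal.aleph Ordinal.omega0) :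
    ∃ 𝒱 ⊆ 𝒰, 𝒱.Countable ∧ ⋃₀ 𝒱 = Set.univ := by
  rcases le_or_gt ℵ₀ #𝒰 with h | h
  · obtain ⟨o, ho⟩ : ∃ o, #𝒰 = Cardinal.aleph o := by
      obtain ⟨o, ho⟩ := Cardinal.mem_range_aleph_iff.2 h; exact ⟨o, ho.symm⟩
    have ho' : o < Ordinal.omega0 := Cardinal.aleph_lt_aleph.1 (ho ▸ hsize)
    obtain ⟨n, rfl⟩ := Ordinal.lt_omega0.1 ho'
    exact key_aux n X hlin 𝒰 hop hcov ho.le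
  · refine key_aux 0 X hlin 𝒰 hop hcov ?_
    rw [Nat.cast_zero, Cardinal.aleph_zero]
    exact h.le
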